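/- If Q and R are positive semidefinite, then for every i ≥ 1 and all x ∈ ℝⁿ, u ∈ ℝᵐ one has xᵀ Q^{(i)} x + uᵀ R^{(i)} u + 2 xᵀ N^{(i)} u ≥ 0. If moreover Q and R are positive definite, then xᵀ Q^{(i)} x + uᵀ R^{(i)} u + 2 xᵀ N^{(i)} u > 0 whenever (x,u) ≠ (0,0); in particular Q^{(i)} and R^{(i)} are positive definite. -/

import Mathlib

open Matrix Finset

private lemma quad_key {n m k : ℕ} (Q : Matrix (Fin k) (Fin k) ℝ) (hQ : Qᵀ = Q)
    (M : Matrix (Fin k) (Fin n) ℝ) (C : Matrix (Fin k) (Fin m) ℝ)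
    (x : Fin n → ℝ) (u : Fin m → ℝ) :
    (M *ᵥ x + C *ᵥ u) ⬝ᵥ (Q *ᵥ (M *ᵥ x + C *ᵥ u)) =
      x ⬝ᵥ ((Mᵀ*Q*M) *ᵥ x) + u ⬝ᵥ ((Cᵀ*Q*C) *ᵥ u) + 2 * (x ⬝ᵥ ((Mᵀ*Q*C) *ᵥ u)) := by
  have h : (C *ᵥ u) ⬝ᵥ (Q *ᵥ (M *ᵥ x)) = (M *ᵥ x) ⬝ᵥ (Q *ᵥ (C *ᵥ u)) := by
    rw [dotProduct_mulVec]
    conv_lhs => rw [← hQ]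
    rw [vecMul_transpose, dotProduct_comm]
  simp only [mulVec_add, dotProduct_add, add_dotProduct, ← mulVec_mulVec,
    dotProduct_mulVec _ Mᵀ, dotProduct_mulVec _ Cᵀ, vecMul_transpose]
  rw [h]; ring

/-- positivity of the collapsed stage cost built from the
generalized weighting matrices. -/
theorem generalized_weighting_positivity {n m : ℕ}
    (A : Matrix (Fin n) (Fin n) ℝ) (B : Matrix (Fin n) (Fin m) ℝ)
    (Q : Matrix (Fin n) (Fin n) ℝ) (R : Matrix (Fin m) (Fin m) ℝ)
    (Qg : ℕ → Matrix (Fin n) (Fin n) ℝ)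
    (Rg : ℕ → Matrix (Fin m) (Fin m) ℝ)
    (Ng : ℕ → Matrix (Fin n) (Fin m) ℝ)
    (hQ1 : Qg 1 = Q) (hR1 : Rg 1 = R) (hN1 : Ng 1 = 0)
    (hQrec : ∀ i, 1 ≤ i → Qg (i + 1) = Qg i + (A ^ i)ᵀ * Q * (A ^ i))
    (hRrec : ∀ i, 1 ≤ i → Rg (i + 1) =
      Rg i + (∑ q ∈ Finset.range i, A ^ q * B)ᵀ * Q * (∑ q ∈ Finset.range i, A ^ q * B) + R)
    (hNrec : ∀ i, 1 ≤ i → Ng (i + 1) =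
      Ng i + (A ^ i)ᵀ * Q * (∑ q ∈ Finset.range i, A ^ q * B))
    (hQpsd : Q.PosSemidef) (hRpsd : R.PosSemidef) :
    (∀ i, 1 ≤ i → ∀ (x : Fin n → ℝ) (u : Fin m → ℝ),
      0 ≤ x ⬝ᵥ (Qg i *ᵥ x) + u ⬝ᵥ (Rg i *ᵥ u) + 2 * (x ⬝ᵥ (Ng i *ᵥ u))) ∧
    (Q.PosDef → R.PosDef → ∀ i, 1 ≤ i →
      (∀ (x : Fin n → ℝ) (u : Fin m → ℝ), ¬(x = 0 ∧ u = 0) →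
        0 < x ⬝ᵥ (Qg i *ᵥ x) + u ⬝ᵥ (Rg i *ᵥ u) + 2 * (x ⬝ᵥ (Ng i *ᵥ u))) ∧
      (Qg i).PosDef ∧ (Rg i).PosDef) := by
  have hQsymm : Qᵀ = Q := by
    rw [← conjTranspose_eq_transpose_of_trivial, hQpsd.1]
  -- the quadratic form dominates the first-stage cost
  have key : ∀ i, 1 ≤ i → ∀ (x : Fin n → ℝ) (u : Fin m → ℝ),
      x ⬝ᵥ (Q *ᵥ x) + u ⬝ᵥ (R *ᵥ u) ≤
        x ⬝ᵥ (Qg i *ᵥ x) + u ⬝ᵥ (Rg i *ᵥ u) + 2 * (x ⬝ᵥ (Ng i *ᵥ u)) := by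
    intro i hi
    induction i, hi using Nat.le_induction with
    | base => intro x u; simp [hQ1, hR1, hN1]
    | succ i hi ih =>
      intro x u
      rw [hQrec i hi, hRrec i hi, hNrec i hi]
      simp only [Matrix.add_mulVec, dotProduct_add]
      set C := ∑ q ∈ Finset.range i, A ^ q * B with hC
      have hq := quad_key Q hQsymm (A ^ i) C x u
      have h1 : 0 ≤ (A ^ i *ᵥ x + C *ᵥ u) ⬝ᵥ (Q *ᵥ (A ^ i *ᵥ x + C *ᵥ u)) := by
        simpa using hQpsd.dotProduct_mulVec_nonneg (A ^ i *ᵥ x + C *ᵥ u)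
      have h2 : (0:ℝ) ≤ u ⬝ᵥ (R *ᵥ u) := by simpa using hRpsd.dotProduct_mulVec_nonneg u
      have h3 := ih x u
      linarith [hq ▸ h1]
  -- hermitian facts
  have hQgherm : ∀ i, 1 ≤ i → (Qg i).IsHermitian := by
    intro i hi
    induction i, hi using Nat.le_induction with
    | base => rw [hQ1]; exact hQpsd.1
    | succ i hi ih =>
      rw [hQrec i hi, Matrix.IsHermitian, conjTranspose_eq_transpose_of_trivial]
      rw [Matrix.IsHermitian, conjTranspose_eq_transpose_of_trivial] at ih
      simp [Matrix.transpose_add, Matrix.transpose_mul, hQsymm, Matrix.mul_assoc, ih]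
  have hRgherm : ∀ i, 1 ≤ i → (Rg i).IsHermitian := by
    intro i hi
    induction i, hi using Nat.le_induction with
    | base => rw [hR1]; exact hRpsd.1
    | succ i hi ih =>
      have hRsymm : Rᵀ = R := by
        rw [← conjTranspose_eq_transpose_of_trivial, hRpsd.1]
      rw [hRrec i hi, Matrix.IsHermitian, conjTranspose_eq_transpose_of_trivial]
      rw [Matrix.IsHermitian, conjTranspose_eq_transpose_of_trivial] at ih
      simp [Matrix.transpose_add, Matrix.transpose_mul, hQsymm, hRsymm, Matrix.mul_assoc, ih]
  constructor
  · intro i hi x u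
    have h1 : (0:ℝ) ≤ x ⬝ᵥ (Q *ᵥ x) := by simpa using hQpsd.dotProduct_mulVec_nonneg x
    have h2 : (0:ℝ) ≤ u ⬝ᵥ (R *ᵥ u) := by simpa using hRpsd.dotProduct_mulVec_nonneg u
    linarith [key i hi x u]
  · intro hQpd hRpd i hi
    have strict : ∀ (x : Fin n → ℝ) (u : Fin m → ℝ), ¬(x = 0 ∧ u = 0) →
        0 < x ⬝ᵥ (Qg i *ᵥ x) + u ⬝ᵥ (Rg i *ᵥ u) + 2 * (x ⬝ᵥ (Ng i *ᵥ u)) := by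
      intro x u h
      have hbase : 0 < x ⬝ᵥ (Q *ᵥ x) + u ⬝ᵥ (R *ᵥ u) := by
        rcases not_and_or.mp h with hx | hu
        · have h1 : (0:ℝ) < x ⬝ᵥ (Q *ᵥ x) := by simpa using hQpd.dotProduct_mulVec_pos hx
          have h2 : (0:ℝ) ≤ u ⬝ᵥ (R *ᵥ u) := by simpa using hRpsd.dotProduct_mulVec_nonneg u
          linarith
        · have h1 : (0:ℝ) ≤ x ⬝ᵥ (Q *ᵥ x) := by simpa using hQpsd.dotProduct_mulVec_nonneg x
          have h2 : (0:ℝ) < u ⬝ᵥ (R *ᵥ u) := by simpa using hRpd.dotProduct_mulVec_pos hu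
          linarith
      linarith [key i hi x u]
    refine ⟨strict, PosDef.of_dotProduct_mulVec_pos (hQgherm i hi) ?_, PosDef.of_dotProduct_mulVec_pos (hRgherm i hi) ?_⟩
    · intro x hx
      have := strict x 0 (by simp [hx])
      simpa using this
    · intro u hu
      have := strict 0 u (by simp [hu])
      simpa using this
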